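/- For every real ε > 0 there exists a constant C = C(ε) > 0 such that for every natural number n ≥ 2 there is a 2-coloring of the edges of the complete graph on the vertex set {2, 3, ..., n} in which every monochromatic clique S satisfies ∑_{s ∈ S} 1/(log₂ s)^(1+ε) ≤ C. -/

import Mathlib

open Finset

private lemma card_forced {α β : Type*} [Fintype α] [DecidableEq α] [Fintype β]
    [DecidableEq β] (P : Finset α) (v : β) :
    (Finset.univ.filter fun f : α → β => ∀ a ∈ P, f a = v).card
      = Fintype.card β ^ (Fintype.card α - P.card) := by
  classical
  have e : {f : α → β // ∀ a ∈ P, f a = v} ≃ ({a : α // a ∉ P} → β) :=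
    { toFun := fun f a => f.1 a.1
      invFun := fun g => ⟨fun a => if h : a ∈ P then v else g ⟨a, h⟩, fun a ha => by simp [ha]⟩
      left_inv := by
        rintro ⟨f, hf⟩
        ext a
        by_cases h : a ∈ P <;> simp [h, hf a]
      right_inv := by
        intro g
        ext a
        simp [a.2] }
  have h1 : (Finset.univ.filter fun f : α → β => ∀ a ∈ P, f a = v).card
      = Fintype.card {f : α → β // ∀ a ∈ P, f a = v} := (Fintype.card_subtype _).symm
  rw [h1, Fintype.card_congr e, Fintype.card_fun]
  congr 1
  rw [Fintype.card_subtype_compl, Fintype.card_coe]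

private lemma card_lt_pairs {α : Type*} [LinearOrder α] [DecidableEq α] (T : Finset α) :
    ((T ×ˢ T).filter fun p => p.1 < p.2).card = T.card.choose 2 := by
  classical
  set L := (T ×ˢ T).filter fun p => p.1 < p.2 with hL
  set G := (T ×ˢ T).filter fun p => p.2 < p.1 with hG
  have himg : L.image Prod.swap = G := by
    ext ⟨a, b⟩
    simp only [hL, hG, Finset.mem_image, Finset.mem_filter, Finset.mem_product, Prod.exists,
      Prod.swap_prod_mk, Prod.mk.injEq]
    constructor
    · rintro ⟨x, y, ⟨⟨h1, h2⟩, h3⟩, h4, h5⟩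
      subst h4; subst h5; exact ⟨⟨h2, h1⟩, h3⟩
    · rintro ⟨⟨h1, h2⟩, h3⟩
      exact ⟨b, a, ⟨⟨h2, h1⟩, h3⟩, rfl, rfl⟩
  have hcard : L.card = G.card := by
    rw [← himg, Finset.card_image_of_injective _ Prod.swap_injective]
  have hunion : L ∪ G = T.offDiag := by
    ext ⟨a, b⟩
    simp only [hL, hG, Finset.mem_union, Finset.mem_filter, Finset.mem_product,
      Finset.mem_offDiag]
    constructor
    · rintro (⟨⟨h1, h2⟩, h3⟩ | ⟨⟨h1, h2⟩, h3⟩)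
      · exact ⟨h1, h2, h3.ne⟩
      · exact ⟨h1, h2, h3.ne'⟩
    · rintro ⟨h1, h2, h3⟩
      rcases lt_or_gt_of_ne h3 with h | h
      · exact Or.inl ⟨⟨h1, h2⟩, h⟩
      · exact Or.inr ⟨⟨h1, h2⟩, h⟩
  have hdisj : Disjoint L G := by
    rw [Finset.disjoint_left]
    intro p hp hq
    rw [hL, Finset.mem_filter] at hp
    rw [hG, Finset.mem_filter] at hq
    exact absurd hp.2 (not_lt.2 hq.2.le)
  have h2 : L.card + G.card = T.card * T.card - T.card := by
    rw [← Finset.card_union_of_disjoint hdisj, hunion, Finset.offDiag_card]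
  have hm : T.card * (T.card - 1) = T.card * T.card - T.card := by
    rw [Nat.mul_sub, Nat.mul_one]
  rw [Nat.choose_two_right]
  have hc : 2 * L.card = T.card * (T.card - 1) := by omega
  generalize hq : T.card * (T.card - 1) = q at hc ⊢
  omega

private lemma ramsey_exists (N t : ℕ) (h : 2 * N ^ t < 2 ^ (t.choose 2)) :
    ∃ c : ℕ → ℕ → Fin 2, ∀ S : Finset ℕ, (∀ s ∈ S, s < N) →
      (∃ clr : Fin 2, ∀ i ∈ S, ∀ j ∈ S, i < j → c i j = clr) → S.card < t := by
  classical
  by_cases htN : N < t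
  · refine ⟨fun _ _ => 0, fun S hS _ => ?_⟩
    have hsub : S ⊆ Finset.range N := fun s hs => Finset.mem_range.2 (hS s hs)
    calc S.card ≤ (Finset.range N).card := Finset.card_le_card hsub
      _ = N := Finset.card_range N
      _ < t := htN
  push_neg at htN
  set m := t.choose 2 with hm
  have hmN : m ≤ N * N := by
    have h1 : m ≤ t * t := by
      rw [hm, Nat.choose_two_right]
      calc t * (t - 1) / 2 ≤ t * (t - 1) := Nat.div_le_self _ _
        _ ≤ t * t := Nat.mul_le_mul_left _ (Nat.sub_le _ _)
    exact h1.trans (Nat.mul_le_mul htN htN)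
  set Mono : (Fin N × Fin N → Fin 2) → Finset (Fin N) → Prop :=
    fun f T => ∃ clr : Fin 2, ∀ i ∈ T, ∀ j ∈ T, i < j → f (i, j) = clr with hMono
  set Bad : Finset (Fin N × Fin N → Fin 2) :=
    Finset.univ.filter (fun f =>
      ∃ T ∈ Finset.powersetCard t (Finset.univ : Finset (Fin N)), Mono f T) with hBadDef
  have hsub : Bad ⊆ (Finset.powersetCard t (Finset.univ : Finset (Fin N))).biUnion
      fun T => Finset.univ.filter fun f => Mono f T := by
    intro f hf
    rw [hBadDef, Finset.mem_filter] at hf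
    obtain ⟨T, hT, hMf⟩ := hf.2
    exact Finset.mem_biUnion.2 ⟨T, hT, Finset.mem_filter.2 ⟨Finset.mem_univ _, hMf⟩⟩
  have hcount : ∀ T ∈ Finset.powersetCard t (Finset.univ : Finset (Fin N)),
      (Finset.univ.filter fun f : Fin N × Fin N → Fin 2 => Mono f T).card
        ≤ 2 * 2 ^ (N * N - m) := by
    intro T hT
    have hTc : T.card = t := (Finset.mem_powersetCard.1 hT).2
    set P : Finset (Fin N × Fin N) := (T ×ˢ T).filter fun p => p.1 < p.2 with hP
    have hPc : P.card = m := by rw [hP, card_lt_pairs, hTc, hm]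
    have hsub2 : (Finset.univ.filter fun f : Fin N × Fin N → Fin 2 => Mono f T)
        ⊆ (Finset.univ.filter fun f => ∀ p ∈ P, f p = (0 : Fin 2))
          ∪ (Finset.univ.filter fun f => ∀ p ∈ P, f p = (1 : Fin 2)) := by
      intro f hf
      rw [Finset.mem_filter] at hf
      obtain ⟨clr, hclr⟩ := hf.2
      have hall : ∀ p ∈ P, f p = clr := by
        rintro ⟨i, j⟩ hp
        rw [hP, Finset.mem_filter, Finset.mem_product] at hp
        exact hclr i hp.1.1 j hp.1.2 hp.2
      fin_cases clr
      · exact Finset.mem_union_left _ (Finset.mem_filter.2 ⟨Finset.mem_univ _, hall⟩)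
      · exact Finset.mem_union_right _ (Finset.mem_filter.2 ⟨Finset.mem_univ _, hall⟩)
    calc (Finset.univ.filter fun f : Fin N × Fin N → Fin 2 => Mono f T).card
        ≤ _ := Finset.card_le_card hsub2
      _ ≤ (Finset.univ.filter fun f : Fin N × Fin N → Fin 2 => ∀ p ∈ P, f p = (0:Fin 2)).card
          + (Finset.univ.filter fun f : Fin N × Fin N → Fin 2 => ∀ p ∈ P, f p = (1:Fin 2)).card :=
          Finset.card_union_le _ _
      _ = 2 ^ (N * N - m) + 2 ^ (N * N - m) := by
          rw [card_forced P (0 : Fin 2), card_forced P (1 : Fin 2)]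
          simp [hPc, Fintype.card_prod]
      _ = 2 * 2 ^ (N * N - m) := by ring
  have hBadCard : Bad.card < 2 ^ (N * N) := by
    have hpos : 0 < 2 ^ (N * N - m) := Nat.pow_pos (by norm_num)
    calc Bad.card
        ≤ ((Finset.powersetCard t (Finset.univ : Finset (Fin N))).biUnion
            fun T => Finset.univ.filter fun f => Mono f T).card := Finset.card_le_card hsub
      _ ≤ ∑ T ∈ Finset.powersetCard t (Finset.univ : Finset (Fin N)),
            (Finset.univ.filter fun f : Fin N × Fin N → Fin 2 => Mono f T).card :=
          Finset.card_biUnion_le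
      _ ≤ ∑ _T ∈ Finset.powersetCard t (Finset.univ : Finset (Fin N)),
            (2 * 2 ^ (N * N - m)) := Finset.sum_le_sum hcount
      _ = (Finset.powersetCard t (Finset.univ : Finset (Fin N))).card * (2 * 2 ^ (N*N - m)) :=
          Finset.sum_const _
      _ = N.choose t * (2 * 2 ^ (N * N - m)) := by
          rw [Finset.card_powersetCard, Finset.card_univ, Fintype.card_fin]
      _ ≤ N ^ t * (2 * 2 ^ (N * N - m)) :=
          Nat.mul_le_mul_right _ (Nat.choose_le_pow _ _)
      _ = (2 * N ^ t) * 2 ^ (N * N - m) := by ring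
      _ < 2 ^ m * 2 ^ (N * N - m) := (Nat.mul_lt_mul_right hpos).2 h
      _ = 2 ^ (N * N) := by rw [← pow_add]; congr 1; omega
  have hunivCard : (Finset.univ : Finset (Fin N × Fin N → Fin 2)).card = 2 ^ (N * N) := by
    rw [Finset.card_univ, Fintype.card_fun, Fintype.card_fin, Fintype.card_prod, Fintype.card_fin]
  have hne : Bad ≠ Finset.univ := by
    intro hEq
    rw [hEq, hunivCard] at hBadCard
    exact lt_irrefl _ hBadCard
  obtain ⟨f, -, hf⟩ := Finset.exists_of_ssubset ((Finset.subset_univ Bad).ssubset_of_ne hne)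
  refine ⟨fun i j => if hi : i < N then if hj : j < N then f (⟨i, hi⟩, ⟨j, hj⟩) else 0 else 0,
    fun S hS hmono => ?_⟩
  by_contra hge
  push_neg at hge
  set T0 := S.attachFin hS with hT0
  have hT0c : T0.card = S.card := Finset.card_attachFin _ _
  obtain ⟨T, hTsub, hTc⟩ := Finset.exists_subset_card_eq (n := t) (s := T0) (by omega)
  apply hf
  rw [hBadDef, Finset.mem_filter]
  refine ⟨Finset.mem_univ _, T, Finset.mem_powersetCard.2 ⟨Finset.subset_univ _, hTc⟩, ?_⟩
  obtain ⟨clr, hclr⟩ := hmono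
  refine ⟨clr, fun i hi j hj hij => ?_⟩
  have hiS : (i : ℕ) ∈ S := (Finset.mem_attachFin _).1 (hTsub hi)
  have hjS : (j : ℕ) ∈ S := (Finset.mem_attachFin _).1 (hTsub hj)
  have := hclr i hiS j hjS (by exact_mod_cast hij)
  simpa [i.isLt, j.isLt] using this

private lemma numeric (k : ℕ) :
    2 * (2 ^ (2 ^ (k + 1))) ^ (2 ^ (k + 3)) < 2 ^ ((2 ^ (k + 3)).choose 2) := by
  set a := 2 ^ k with ha
  have ha1 : 1 ≤ a := Nat.one_le_two_pow
  have h1 : 2 ^ (k + 1) = 2 * a := by rw [ha, pow_succ]; ring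
  have h3 : 2 ^ (k + 3) = 8 * a := by rw [ha, pow_add]; ring
  rw [h1, h3, ← pow_mul]
  rw [← pow_succ' 2 (2 * a * (8 * a))]
  have hch : (8 * a).choose 2 = 4 * a * (8 * a - 1) := by
    rw [Nat.choose_two_right]
    have h : 8 * a * (8 * a - 1) = 2 * (4 * a * (8 * a - 1)) := by ring
    rw [h, Nat.mul_div_cancel_left _ (by norm_num)]
  rw [hch]
  apply Nat.pow_lt_pow_right (by norm_num)
  have hb : 8 * a - 1 + 1 = 8 * a := by omega
  set b := 8 * a - 1 with hbd
  have hb7 : 7 ≤ b := by omega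
  nlinarith [ha1, hb, hb7]


/-- Section 6.2. For every `ε > 0` there is a constant `C > 0` such
that for every `n ≥ 2` there is a 2-coloring of the edges of the complete graph on
`{2, ..., n}` in which every monochromatic clique `S` satisfies
`∑_{s ∈ S} 1 / (log₂ s)^(1+ε) ≤ C`. -/
theorem weighted_ramsey_converges_for_power_weight (ε : ℝ) (hε : 0 < ε) :
    ∃ C : ℝ, 0 < C ∧ ∀ n : ℕ, 2 ≤ n →
      ∃ c : ℕ → ℕ → Fin 2,
        ∀ S : Finset ℕ, S ⊆ Finset.Icc 2 n →
          (∃ clr : Fin 2, ∀ i ∈ S, ∀ j ∈ S, i < j → c i j = clr) →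
          ∑ s ∈ S, 1 / (Real.logb 2 (s : ℝ)) ^ (1 + ε) ≤ C := by
  classical
  -- geometric ratio
  set r : ℝ := (2 : ℝ) ^ (-ε) with hrdef
  have hr0 : 0 < r := Real.rpow_pos_of_pos (by norm_num) _
  have hr1 : r < 1 := Real.rpow_lt_one_of_one_lt_of_neg (by norm_num) (by linarith)
  have hr1' : 0 < 1 - r := by linarith
  refine ⟨8 * (1 - r)⁻¹, by positivity, fun n hn => ?_⟩
  -- block colorings
  have hF : ∀ k : ℕ, ∃ c : ℕ → ℕ → Fin 2, ∀ S : Finset ℕ, (∀ s ∈ S, s < 2 ^ (2 ^ (k + 1))) →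
      (∃ clr : Fin 2, ∀ i ∈ S, ∀ j ∈ S, i < j → c i j = clr) → S.card < 2 ^ (k + 3) :=
    fun k => ramsey_exists _ _ (numeric k)
  choose F hFspec using hF
  -- block index
  set κ : ℕ → ℕ := fun s => Nat.log 2 (Nat.log 2 s) with hκ
  refine ⟨fun i j => if κ i = κ j then F (κ i) i j else 0, fun S hS hmono => ?_⟩
  obtain ⟨clr, hclr⟩ := hmono
  have hmem : ∀ s ∈ S, 2 ≤ s ∧ s ≤ n := fun s hs => Finset.mem_Icc.1 (hS hs)
  have hmaps : ∀ s ∈ S, κ s ∈ Finset.range (n + 1) := by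
    intro s hs
    have : κ s ≤ s := (Nat.log_le_self 2 _).trans (Nat.log_le_self 2 s)
    exact Finset.mem_range.2 (by have := (hmem s hs).2; omega)
  rw [← Finset.sum_fiberwise_of_maps_to hmaps (fun s => 1 / (Real.logb 2 (s : ℝ)) ^ (1 + ε))]
  -- bound each fiber
  have hfiber : ∀ k ∈ Finset.range (n + 1),
      ∑ s ∈ S.filter (fun s => κ s = k), 1 / (Real.logb 2 (s : ℝ)) ^ (1 + ε)
        ≤ 8 * r ^ k := by
    intro k _
    set Sk := S.filter (fun s => κ s = k) with hSk
    have hSkmem : ∀ s ∈ Sk, 2 ≤ s ∧ κ s = k := by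
      intro s hs
      rw [hSk, Finset.mem_filter] at hs
      exact ⟨(hmem s hs.1).1, hs.2⟩
    -- cardinality bound via the block coloring
    have hcard : Sk.card < 2 ^ (k + 3) := by
      apply hFspec k Sk
      · intro s hs
        obtain ⟨h2, hks⟩ := hSkmem s hs
        have hks' : Nat.log 2 (Nat.log 2 s) = k := hks
        have hls : 1 ≤ Nat.log 2 s := Nat.log_pos one_lt_two h2
        have h1 : Nat.log 2 s < 2 ^ (k + 1) := by
          rw [← Nat.log_lt_iff_lt_pow one_lt_two (by omega)]
          omega
        rw [← Nat.log_lt_iff_lt_pow one_lt_two (by omega)]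
        exact h1
      · refine ⟨clr, fun i hi j hj hij => ?_⟩
        have hki := (hSkmem i hi).2
        have hkj := (hSkmem j hj).2
        have hiS : i ∈ S := Finset.mem_of_mem_filter _ hi
        have hjS : j ∈ S := Finset.mem_of_mem_filter _ hj
        simpa [hki, hkj] using hclr i hiS j hjS hij
    -- weight bound for elements of the fiber
    have hweight : ∀ s ∈ Sk, 1 / (Real.logb 2 (s : ℝ)) ^ (1 + ε)
        ≤ ((2 : ℝ) ^ k)⁻¹ * r ^ k := by
      intro s hs
      obtain ⟨h2, hks⟩ := hSkmem s hs
      have hs0 : s ≠ 0 := by omega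
      have hls : 1 ≤ Nat.log 2 s := Nat.log_pos one_lt_two h2
      -- 2 ^ 2 ^ k ≤ s
      have hks' : Nat.log 2 (Nat.log 2 s) = k := hks
      have hlow : (2 : ℕ) ^ 2 ^ k ≤ s := by
        have h1 : 2 ^ k ≤ Nat.log 2 s := by
          have h0 := Nat.pow_log_le_self 2 (x := Nat.log 2 s) (by omega)
          rw [← hks']
          exact h0
        calc (2:ℕ) ^ 2 ^ k ≤ 2 ^ Nat.log 2 s := Nat.pow_le_pow_right (by norm_num) h1
          _ ≤ s := Nat.pow_log_le_self 2 hs0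
      -- logb bound
      have hlogb : ((2 : ℝ) ^ k : ℝ) ≤ Real.logb 2 (s : ℝ) := by
        have hcast : ((2 : ℝ) ^ (2 ^ k : ℕ)) ≤ (s : ℝ) := by exact_mod_cast hlow
        have h0 := Real.logb_le_logb_of_le (b := 2) (by norm_num)
          (x := (2:ℝ) ^ (2 ^ k : ℕ)) (by positivity) hcast
        rw [Real.logb_pow, Real.logb_self_eq_one (by norm_num), mul_one] at h0
        exact_mod_cast h0
      have h2kpos : (0 : ℝ) < (2 : ℝ) ^ k := by positivity
      have hlogbpos : (0 : ℝ) < Real.logb 2 (s : ℝ) := lt_of_lt_of_le h2kpos hlogb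
      have hrpow : ((2 : ℝ) ^ k) ^ ((1 : ℝ) + ε) ≤ (Real.logb 2 (s : ℝ)) ^ ((1 : ℝ) + ε) :=
        Real.rpow_le_rpow h2kpos.le hlogb (by linarith)
      have hpos2 : (0 : ℝ) < ((2 : ℝ) ^ k) ^ ((1 : ℝ) + ε) := Real.rpow_pos_of_pos h2kpos _
      have e1 : ((2 : ℝ) ^ k : ℝ) = (2 : ℝ) ^ (k : ℝ) := (Real.rpow_natCast 2 k).symm
      have e2 : r ^ k = (2 : ℝ) ^ (-(ε * (k : ℝ))) := by
        rw [hrdef, ← Real.rpow_natCast ((2 : ℝ) ^ (-ε)) k, ← Real.rpow_mul (by norm_num)]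
        congr 1
        ring
      have key : (((2 : ℝ) ^ k) ^ ((1 : ℝ) + ε))⁻¹ = ((2 : ℝ) ^ k)⁻¹ * r ^ k := by
        rw [e1, e2, ← Real.rpow_mul (by norm_num), ← Real.rpow_neg (by norm_num),
          ← Real.rpow_neg (by norm_num), ← Real.rpow_add (by norm_num)]
        congr 1
        ring
      calc 1 / (Real.logb 2 (s : ℝ)) ^ (1 + ε)
          ≤ 1 / ((2 : ℝ) ^ k) ^ ((1 : ℝ) + ε) := by
            apply one_div_le_one_div_of_le hpos2 hrpow
        _ = ((2 : ℝ) ^ k)⁻¹ * r ^ k := by rw [one_div, key]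
    calc ∑ s ∈ Sk, 1 / (Real.logb 2 (s : ℝ)) ^ (1 + ε)
        ≤ Sk.card • (((2 : ℝ) ^ k)⁻¹ * r ^ k) := Finset.sum_le_card_nsmul _ _ _ hweight
      _ = (Sk.card : ℝ) * (((2 : ℝ) ^ k)⁻¹ * r ^ k) := by rw [nsmul_eq_mul]
      _ ≤ ((2 : ℝ) ^ (k + 3)) * (((2 : ℝ) ^ k)⁻¹ * r ^ k) := by
          apply mul_le_mul_of_nonneg_right _ (by positivity)
          exact_mod_cast hcard.le
      _ = 8 * r ^ k := by
          have : ((2 : ℝ) ^ k) ≠ 0 := by positivity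
          field_simp [pow_add]
          ring
  calc ∑ k ∈ Finset.range (n + 1), ∑ s ∈ S.filter (fun s => κ s = k),
        1 / (Real.logb 2 (s : ℝ)) ^ (1 + ε)
      ≤ ∑ k ∈ Finset.range (n + 1), 8 * r ^ k := Finset.sum_le_sum hfiber
    _ = 8 * ∑ k ∈ Finset.range (n + 1), r ^ k := by rw [Finset.mul_sum]
    _ ≤ 8 * (1 - r)⁻¹ := by
        apply mul_le_mul_of_nonneg_left _ (by norm_num)
        calc ∑ k ∈ Finset.range (n + 1), r ^ k
            ≤ ∑' k : ℕ, r ^ k := Summable.sum_le_tsum _ (fun i _ => (pow_pos hr0 i).le)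
              (summable_geometric_of_lt_one hr0.le hr1)
          _ = (1 - r)⁻¹ := tsum_geometric_of_lt_one hr0.le hr1
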